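/- (Bilevel-to-MPCC direction.) Consider the optimistic bilevel problem (BP): minimize θ_l(x,y) over x ∈ X and y ∈ S(x), where S(x) is the set of minimizers of θ_f(x,·) over K(x) = {y : h_i(x,y) = 0 for i ∈ I, g_j(x,y) ≤ 0 for j ∈ J}. Assume θ_f(x,·) is convex and C¹ for every x ∈ X, g_j(x,·) is convex and C¹ for every x and j, h_i(x,·) is affine for every x and i, and for every x ∈ X the set K(x) satisfies the Abadie constraint qualification (T_{K(x)}(y) = L_{K(x)}(y) for all y ∈ K(x)). If (x̄, ȳ) is an optimal solution of (BP), then there exist λ̄ ∈ ℝ^I and μ̄ ∈ ℝ^J such that (x̄, ȳ, λ̄, μ̄) is an optimal solution of the MPCC: minimize θ_l(x,y) over tuples (x,y,λ,μ) with x ∈ X satisfying ∇_y θ_f(x,y) + Σ_i λ_i ∇_y h_i(x,y) + Σ_j μ_j ∇_y g_j(x,y) = 0, μ_j ≥ 0 and μ_j g_j(x,y) = 0 for all j ∈ J, h_i(x,y) = 0 for all i ∈ I, and g_j(x,y) ≤ 0 for all j ∈ J. -/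

import Mathlib

open Filter Topology RealInnerProductSpace

noncomputable section

/-- The Bouligand tangent cone: directions `ν` such that there are sequences `νₖ → ν` and
`tₖ → 0⁺` with `y + tₖ • νₖ ∈ Y` for every `k`. -/
def bouligandTangentCone {E : Type*} [NormedAddCommGroup E] [InnerProductSpace ℝ E]
    (Y : Set E) (y : E) : Set E :=
  {ν | ∃ (νs : ℕ → E) (t : ℕ → ℝ),
    Tendsto νs atTop (𝓝 ν) ∧ (∀ k, 0 < t k) ∧ Tendsto t atTop (𝓝 0) ∧
    ∀ k, y + t k • νs k ∈ Y}

/-- The lower-level feasible set `K(x)` described by `hᵢ(x,y) = 0` and `gⱼ(x,y) ≤ 0`. -/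
def lowerFeasSet {p q : ℕ} {I J : Type*}
    (hI : I → EuclideanSpace ℝ (Fin p) → EuclideanSpace ℝ (Fin q) → ℝ)
    (gJ : J → EuclideanSpace ℝ (Fin p) → EuclideanSpace ℝ (Fin q) → ℝ)
    (x : EuclideanSpace ℝ (Fin p)) : Set (EuclideanSpace ℝ (Fin q)) :=
  {y | (∀ i, hI i x y = 0) ∧ ∀ j, gJ j x y ≤ 0}

/-- The linearized tangent cone of `K(x)` at `y`, taken with respect to the `y`-variable. -/
def linearizedConeLower {p q : ℕ} {I J : Type*}
    (hI : I → EuclideanSpace ℝ (Fin p) → EuclideanSpace ℝ (Fin q) → ℝ)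
    (gJ : J → EuclideanSpace ℝ (Fin p) → EuclideanSpace ℝ (Fin q) → ℝ)
    (x : EuclideanSpace ℝ (Fin p)) (y : EuclideanSpace ℝ (Fin q)) :
    Set (EuclideanSpace ℝ (Fin q)) :=
  {ν | (∀ i, ⟪gradient (hI i x) y, ν⟫ = 0) ∧
    ∀ j, gJ j x y = 0 → ⟪gradient (gJ j x) y, ν⟫ ≤ 0}

/-- The lower-level solution set `S(x)`: minimizers of `θ_f(x,·)` over `K(x)`. -/
def lowerSolSet {p q : ℕ} {I J : Type*}
    (θf : EuclideanSpace ℝ (Fin p) → EuclideanSpace ℝ (Fin q) → ℝ)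
    (hI : I → EuclideanSpace ℝ (Fin p) → EuclideanSpace ℝ (Fin q) → ℝ)
    (gJ : J → EuclideanSpace ℝ (Fin p) → EuclideanSpace ℝ (Fin q) → ℝ)
    (x : EuclideanSpace ℝ (Fin p)) : Set (EuclideanSpace ℝ (Fin q)) :=
  {y ∈ lowerFeasSet hI gJ x | ∀ y' ∈ lowerFeasSet hI gJ x, θf x y ≤ θf x y'}

/-- Feasibility for the MPCC reformulation: `x ∈ X`, stationarity of the lower-level
Lagrangian in `y`, nonnegativity of `μ`, complementary slackness, and lower-level
feasibility of `(x,y)`. -/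
def MPCCFeasible {p q : ℕ} {I J : Type*} [Fintype I] [Fintype J]
    (X : Set (EuclideanSpace ℝ (Fin p)))
    (θf : EuclideanSpace ℝ (Fin p) → EuclideanSpace ℝ (Fin q) → ℝ)
    (hI : I → EuclideanSpace ℝ (Fin p) → EuclideanSpace ℝ (Fin q) → ℝ)
    (gJ : J → EuclideanSpace ℝ (Fin p) → EuclideanSpace ℝ (Fin q) → ℝ)
    (x : EuclideanSpace ℝ (Fin p)) (y : EuclideanSpace ℝ (Fin q))
    (lam : I → ℝ) (mu : J → ℝ) : Prop :=
  x ∈ X ∧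
  gradient (θf x) y + ∑ i, lam i • gradient (hI i x) y
    + ∑ j, mu j • gradient (gJ j x) y = 0 ∧
  (∀ j, 0 ≤ mu j) ∧ (∀ j, mu j * gJ j x y = 0) ∧
  (∀ i, hI i x y = 0) ∧ (∀ j, gJ j x y ≤ 0)

section Aux

variable {E : Type*} [NormedAddCommGroup E] [InnerProductSpace ℝ E] [CompleteSpace E]

lemma inner_gradient_eq (f : E → ℝ) (x v : E) :
    ⟪gradient f x, v⟫ = fderiv ℝ f x v := by
  rw [gradient, InnerProductSpace.toDual_symm_apply]

lemma convex_gradient_ineq {f : E → ℝ} (hconv : ConvexOn ℝ Set.univ f)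
    (hdiff : ContDiff ℝ 1 f) (x y : E) :
    f x + ⟪gradient f x, y - x⟫ ≤ f y := by
  set D : ℝ := ⟪gradient f x, y - x⟫ with hD
  set φ : ℝ → ℝ := fun t => f (x + t • (y - x)) with hφ
  have hc : HasDerivAt (fun t : ℝ => x + t • (y - x)) (y - x) 0 := by
    simpa using ((hasDerivAt_id (0:ℝ)).smul_const (y - x)).const_add x
  have hder : HasDerivAt φ D 0 := by
    have hf : HasFDerivAt f (fderiv ℝ f x) (x + (0:ℝ) • (y - x)) := by
      simpa using (hdiff.differentiable one_ne_zero x).hasFDerivAt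
    have h2 := hf.comp_hasDerivAt (x := (0:ℝ)) hc
    rw [hD, inner_gradient_eq]
    exact h2
  have key : ∀ᶠ t in 𝓝[>] (0:ℝ), slope φ 0 t ≤ f y - f x := by
    filter_upwards [Ioc_mem_nhdsGT_of_mem (Set.left_mem_Ico.2 one_pos)] with t ht
    have h1 : φ t ≤ f x + t * (f y - f x) := by
      have h2 := hconv.2 (Set.mem_univ x) (Set.mem_univ y)
        (show (0:ℝ) ≤ 1 - t by linarith [ht.2]) (le_of_lt ht.1)
        (show 1 - t + t = 1 by ring)
      have he : (1 - t) • x + t • y = x + t • (y - x) := by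
        simp [smul_sub, sub_smul]; abel
      rw [he] at h2
      calc φ t ≤ (1 - t) * f x + t * f y := h2
        _ = f x + t * (f y - f x) := by ring
    have hφ0 : φ 0 = f x := by simp [hφ]
    rw [slope_def_field, sub_zero, div_le_iff₀ ht.1, hφ0]
    linarith
  have hlim : Tendsto (slope φ 0) (𝓝[>] (0:ℝ)) (𝓝 D) :=
    (hasDerivAt_iff_tendsto_slope.1 hder).mono_left
      (nhdsWithin_mono _ (fun t ht => ne_of_gt ht))
  have : D ≤ f y - f x := le_of_tendsto hlim key
  linarith

lemma grad_nonneg_tangent {f : E → ℝ} (hconv : ConvexOn ℝ Set.univ f)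
    (hdiff : ContDiff ℝ 1 f) {Y : Set E} {y : E}
    (hmin : ∀ z ∈ Y, f y ≤ f z) {ν : E}
    (hν : ∃ (νs : ℕ → E) (t : ℕ → ℝ),
      Tendsto νs atTop (𝓝 ν) ∧ (∀ k, 0 < t k) ∧ Tendsto t atTop (𝓝 0) ∧
      ∀ k, y + t k • νs k ∈ Y) :
    0 ≤ ⟪gradient f y, ν⟫ := by
  obtain ⟨νs, t, hνs, htpos, ht0, hmem⟩ := hν
  have hgc : Continuous (gradient f) := by
    have : Continuous (fderiv ℝ f) := hdiff.continuous_fderiv one_ne_zero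
    exact (InnerProductSpace.toDual ℝ E).symm.continuous.comp this
  have hyk : Tendsto (fun k => y + t k • νs k) atTop (𝓝 y) := by
    have : Tendsto (fun k => t k • νs k) atTop (𝓝 ((0:ℝ) • ν)) := ht0.smul hνs
    simpa using tendsto_const_nhds.add this
  have hterm : ∀ k, 0 ≤ ⟪gradient f (y + t k • νs k), νs k⟫ := by
    intro k
    have h1 := convex_gradient_ineq hconv hdiff (y + t k • νs k) y
    have h2 : f y ≤ f (y + t k • νs k) := hmin _ (hmem k)
    have h3 : ⟪gradient f (y + t k • νs k), y - (y + t k • νs k)⟫ ≤ 0 := by linarith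
    have h4 : y - (y + t k • νs k) = -(t k • νs k) := by abel
    rw [h4, inner_neg_right, real_inner_smul_right] at h3
    nlinarith [htpos k]
  have hlim : Tendsto (fun k => ⟪gradient f (y + t k • νs k), νs k⟫) atTop
      (𝓝 ⟪gradient f y, ν⟫) :=
    ((hgc.tendsto y).comp hyk).inner hνs
  exact ge_of_tendsto hlim (Eventually.of_forall hterm)

end Aux

section Cone

lemma cone_caratheodory {E : Type*} [AddCommGroup E] [Module ℝ E] {ι : Type*} [DecidableEq ι]
    (v : ι → E) (s : Finset ι) :
    ∀ c : ι → ℝ, (∀ i ∈ s, 0 ≤ c i) →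
    ∃ t : Finset ι, t ⊆ s ∧ LinearIndependent ℝ (fun i : t => v i) ∧
      ∃ d : ι → ℝ, (∀ i ∈ t, 0 ≤ d i) ∧ ∑ i ∈ t, d i • v i = ∑ i ∈ s, c i • v i := by
  induction s using Finset.strongInduction with
  | _ s ih =>
  intro c hc
  by_cases hli : LinearIndependent ℝ (fun i : s => v i)
  · exact ⟨s, le_refl _, hli, c, hc, rfl⟩
  · obtain ⟨g, hgsum, i₁, hgne⟩ := Fintype.not_linearIndependent_iff.1 hli
    -- extend g to ι
    set g' : ι → ℝ := fun i => if h : i ∈ s then g ⟨i, h⟩ else 0 with hg'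
    have hg'sum : ∑ i ∈ s, g' i • v i = 0 := by
      rw [← hgsum, ← Finset.sum_coe_sort s (fun i => g' i • v i)]
      exact Finset.sum_congr rfl (fun i _ => by simp [hg', i.2])
    have key : ∀ g'' : ι → ℝ, (∑ i ∈ s, g'' i • v i = 0) → (∃ i ∈ s, 0 < g'' i) →
        ∃ t : Finset ι, t ⊆ s ∧ LinearIndependent ℝ (fun i : t => v i) ∧
          ∃ d : ι → ℝ, (∀ i ∈ t, 0 ≤ d i) ∧ ∑ i ∈ t, d i • v i = ∑ i ∈ s, c i • v i := by
      intro g'' hsum ⟨i₂, hi₂s, hi₂pos⟩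
      set F := s.filter (fun i => 0 < g'' i) with hF
      have hFne : F.Nonempty := ⟨i₂, Finset.mem_filter.2 ⟨hi₂s, hi₂pos⟩⟩
      obtain ⟨i₀, hi₀F, hi₀min⟩ := F.exists_min_image (fun i => c i / g'' i) hFne
      have hi₀s : i₀ ∈ s := (Finset.mem_filter.1 hi₀F).1
      have hi₀pos : 0 < g'' i₀ := (Finset.mem_filter.1 hi₀F).2
      set τ := c i₀ / g'' i₀ with hτ
      have hτ0 : 0 ≤ τ := div_nonneg (hc i₀ hi₀s) hi₀pos.le
      set c' : ι → ℝ := fun i => c i - τ * g'' i with hc'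
      have hc'nn : ∀ i ∈ s, 0 ≤ c' i := by
        intro i hi
        by_cases hgi : 0 < g'' i
        · have := hi₀min i (Finset.mem_filter.2 ⟨hi, hgi⟩)
          rw [div_le_div_iff₀ hi₀pos hgi] at this
          have : τ * g'' i ≤ c i := by
            rw [hτ, div_mul_eq_mul_div, div_le_iff₀ hi₀pos]; linarith
          simp [hc']; linarith
        · push_neg at hgi
          have : τ * g'' i ≤ 0 := mul_nonpos_of_nonneg_of_nonpos hτ0 hgi
          have := hc i hi
          simp [hc']; linarith
      have hc'i₀ : c' i₀ = 0 := by
        simp [hc', hτ]; field_simp; ring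
      have hsum' : ∑ i ∈ s, c' i • v i = ∑ i ∈ s, c i • v i := by
        simp only [hc', sub_smul, mul_smul, Finset.sum_sub_distrib]
        rw [← Finset.smul_sum, hsum, smul_zero, sub_zero]
      have herase : ∑ i ∈ s.erase i₀, c' i • v i = ∑ i ∈ s, c' i • v i := by
        apply Finset.sum_erase
        rw [hc'i₀, zero_smul]
      obtain ⟨t, hts, hli', d, hd, hdsum⟩ :=
        ih (s.erase i₀) (Finset.erase_ssubset hi₀s) c'
          (fun i hi => hc'nn i (Finset.mem_of_mem_erase hi))
      exact ⟨t, hts.trans (Finset.erase_subset _ _), hli', d, hd,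
        by rw [hdsum, herase, hsum']⟩
    by_cases hpos : ∃ i ∈ s, 0 < g' i
    · exact key g' hg'sum hpos
    · apply key (-g')
      · simp only [Pi.neg_apply, neg_smul]
        rw [Finset.sum_neg_distrib, hg'sum, neg_zero]
      · push_neg at hpos
        refine ⟨i₁, i₁.2, ?_⟩
        have h1 : g' i₁ ≠ 0 := by simpa [hg', i₁.2] using hgne
        have h2 := hpos i₁ i₁.2
        simp only [Pi.neg_apply]
        cases lt_or_gt_of_ne h1 with
        | inl h => linarith
        | inr h => linarith


variable {E : Type*} [NormedAddCommGroup E] [InnerProductSpace ℝ E] [FiniteDimensional ℝ E]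

/-- The linear map sending coefficients to the combination. -/
def combLM {ι : Type*} [Fintype ι] (v : ι → E) : (ι → ℝ) →ₗ[ℝ] E where
  toFun d := ∑ i, d i • v i
  map_add' d e := by simp [add_smul, Finset.sum_add_distrib]
  map_smul' r d := by simp [smul_smul, Finset.smul_sum]

lemma cone_isClosed {ι : Type*} [Fintype ι] [DecidableEq ι] (v : ι → E) :
    IsClosed {x : E | ∃ c : ι → ℝ, (∀ i, 0 ≤ c i) ∧ ∑ i, c i • v i = x} := by
  have hrep : {x : E | ∃ c : ι → ℝ, (∀ i, 0 ≤ c i) ∧ ∑ i, c i • v i = x} =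
      ⋃ t : {t : Finset ι // LinearIndependent ℝ (fun i : t => v i)},
        combLM (fun i : (t : Finset ι) => v i) '' {d | ∀ i, 0 ≤ d i} := by
    ext x
    constructor
    · rintro ⟨c, hc, rfl⟩
      obtain ⟨t, -, hli, d, hd, hdsum⟩ :=
        cone_caratheodory v Finset.univ c (fun i _ => hc i)
      refine Set.mem_iUnion.2 ⟨⟨t, hli⟩, ⟨fun i => d i, fun i => hd i i.2, ?_⟩⟩
      show ∑ i : t, d i • v i = _
      rw [Finset.sum_coe_sort t (fun i => d i • v i), hdsum]
    · intro hx
      obtain ⟨⟨t, hli⟩, d, hd, rfl⟩ := Set.mem_iUnion.1 hx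
      set c : ι → ℝ := fun i => if h : i ∈ t then d ⟨i, h⟩ else 0 with hcdef
      have hcnn : ∀ i, 0 ≤ c i := by
        intro i
        by_cases h : i ∈ t
        · simpa [hcdef, h] using hd ⟨i, h⟩
        · simp [hcdef, h]
      refine ⟨c, hcnn, ?_⟩
      show ∑ i : ι, c i • v i = ∑ i : t, d i • v ↑i
      rw [← Finset.sum_subset (Finset.subset_univ t)
        (fun i _ hi => by simp [hcdef, hi])]
      rw [← Finset.sum_coe_sort t (fun i => c i • v i)]
      exact Finset.sum_congr rfl (fun i _ => by simp [hcdef, i.2])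
  rw [hrep]
  apply isClosed_iUnion_of_finite
  rintro ⟨t, hli⟩
  show IsClosed (combLM (fun i : t => v ↑i) '' {d | ∀ i, 0 ≤ d i})
  have hker : LinearMap.ker (combLM (fun i : (t : Finset ι) => v i)) = ⊥ := by
    rw [LinearMap.ker_eq_bot']
    intro d hd
    funext i
    exact Fintype.linearIndependent_iff.1 hli d hd i
  have hemb := LinearMap.isClosedEmbedding_of_injective hker
  apply hemb.isClosedMap
  have : {d : {x // x ∈ t} → ℝ | ∀ i, 0 ≤ d i} = ⋂ i, {d | 0 ≤ d i} := by
    ext d; simp [Set.mem_iInter]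
  rw [this]
  exact isClosed_iInter (fun i => isClosed_le continuous_const (continuous_apply i))

lemma farkas {ι : Type*} [Fintype ι] [DecidableEq ι] [CompleteSpace E] (v : ι → E) (b : E)
    (h : ∀ ν : E, (∀ i, ⟪v i, ν⟫ ≤ 0) → ⟪b, ν⟫ ≤ 0) :
    ∃ μ : ι → ℝ, (∀ i, 0 ≤ μ i) ∧ ∑ i, μ i • v i = b := by
  by_contra hne
  push_neg at hne
  set K : ConvexCone ℝ E :=
    { carrier := {x : E | ∃ c : ι → ℝ, (∀ i, 0 ≤ c i) ∧ ∑ i, c i • v i = x}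
      smul_mem' := by
        rintro r hr x ⟨c, hc, rfl⟩
        exact ⟨fun i => r * c i, fun i => mul_nonneg hr.le (hc i),
          by simp [mul_smul, Finset.smul_sum]⟩
      add_mem' := by
        rintro x ⟨c, hc, rfl⟩ y ⟨c', hc', rfl⟩
        exact ⟨fun i => c i + c' i, fun i => add_nonneg (hc i) (hc' i),
          by simp [add_smul, Finset.sum_add_distrib]⟩ } with hK
  have hbK : b ∉ K := by
    rintro ⟨c, hc, hcsum⟩
    exact hne c hc hcsum
  obtain ⟨y, hy1, hy2⟩ : ∃ y, (∀ x ∈ K, 0 ≤ ⟪x, y⟫) ∧ ⟪y, b⟫ < 0 := by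
    obtain ⟨y, hy1, hy2⟩ := ProperCone.hyperplane_separation'
      (⟨K.toPointedCone (ConvexCone.Pointed.of_nonempty_of_isClosed
        ⟨0, fun _ => 0, fun i => le_refl 0, by simp⟩ (cone_isClosed v)), cone_isClosed v⟩ :
        ProperCone ℝ E) hbK
    exact ⟨y, hy1, by rwa [real_inner_comm]⟩
  have hvK : ∀ i, v i ∈ K := by
    intro i
    exact ⟨fun i' => if i' = i then 1 else 0, fun i' => by positivity, by simp⟩
  have hν : ∀ i, ⟪v i, -y⟫ ≤ 0 := by
    intro i
    rw [inner_neg_right, neg_nonpos]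
    exact hy1 _ (hvK i)
  have := h (-y) hν
  rw [inner_neg_right, neg_nonpos, real_inner_comm] at this
  linarith

end Cone

section Suff

/-- Sufficiency of KKT under convexity: an MPCC-feasible point has `y` solving the
lower-level problem. -/
lemma MPCC_lower_opt {p q : ℕ} {I J : Type*} [Fintype I] [Fintype J]
    {X : Set (EuclideanSpace ℝ (Fin p))}
    {θf : EuclideanSpace ℝ (Fin p) → EuclideanSpace ℝ (Fin q) → ℝ}
    {hI : I → EuclideanSpace ℝ (Fin p) → EuclideanSpace ℝ (Fin q) → ℝ}
    {gJ : J → EuclideanSpace ℝ (Fin p) → EuclideanSpace ℝ (Fin q) → ℝ}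
    {x : EuclideanSpace ℝ (Fin p)} {y : EuclideanSpace ℝ (Fin q)}
    {lam : I → ℝ} {mu : J → ℝ}
    (hθfx : ConvexOn ℝ Set.univ (θf x) ∧ ContDiff ℝ 1 (θf x))
    (hgx : ∀ j, ConvexOn ℝ Set.univ (gJ j x) ∧ ContDiff ℝ 1 (gJ j x))
    (hhx : ∀ i, ∃ (φ : EuclideanSpace ℝ (Fin q) →ₗ[ℝ] ℝ) (c : ℝ),
      ∀ z, hI i x z = φ z + c)
    (hfeas : MPCCFeasible X θf hI gJ x y lam mu) :
    y ∈ lowerSolSet θf hI gJ x := by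
  obtain ⟨hxX, hstat, hmunn, hcomp, hhfeas, hgfeas⟩ := hfeas
  refine ⟨⟨hhfeas, hgfeas⟩, ?_⟩
  intro y' hy'
  have hgrad := convex_gradient_ineq hθfx.1 hθfx.2 y y'
  have hinner : ⟪gradient (θf x) y + ∑ i, lam i • gradient (hI i x) y
      + ∑ j, mu j • gradient (gJ j x) y, y' - y⟫ = 0 := by
    rw [hstat, inner_zero_left]
  rw [inner_add_left, inner_add_left, sum_inner, sum_inner] at hinner
  have hha : ∀ i, ⟪lam i • gradient (hI i x) y, y' - y⟫ = 0 := by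
    intro i
    obtain ⟨φ, c, hφ⟩ := hhx i
    have h1 : ⟪gradient (hI i x) y, y' - y⟫ = φ (y' - y) := by
      rw [inner_gradient_eq]
      have hfd : HasFDerivAt (hI i x) (LinearMap.toContinuousLinearMap φ) y := by
        have he : hI i x = fun z => φ z + c := funext hφ
        rw [he]
        exact (φ.toContinuousLinearMap.hasFDerivAt).add_const c
      rw [hfd.fderiv]; simp
    have e1 : φ y' = -c := by have h := hy'.1 i; rw [hφ y'] at h; linarith
    have e2 : φ y = -c := by have h := hhfeas i; rw [hφ y] at h; linarith
    rw [real_inner_smul_left, h1, map_sub, e1, e2]; ring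
  have hgb : ∀ j, ⟪mu j • gradient (gJ j x) y, y' - y⟫ ≤ 0 := by
    intro j
    have h1 := convex_gradient_ineq (hgx j).1 (hgx j).2 y y'
    have h2 : ⟪gradient (gJ j x) y, y' - y⟫ ≤ gJ j x y' - gJ j x y := by linarith
    have h3 := hmunn j
    have h4 := mul_le_mul_of_nonneg_left h2 h3
    have h5 : mu j * (gJ j x y' - gJ j x y)
        = mu j * gJ j x y' - mu j * gJ j x y := by ring
    have h6 := mul_nonpos_of_nonneg_of_nonpos h3 (hy'.2 j)
    rw [real_inner_smul_left]
    linarith [hcomp j]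
  have hsum1 : ∑ i, ⟪lam i • gradient (hI i x) y, y' - y⟫ = 0 :=
    Finset.sum_eq_zero (fun i _ => hha i)
  have hsum2 : ∑ j, ⟪mu j • gradient (gJ j x) y, y' - y⟫ ≤ (0:ℝ) :=
    Finset.sum_nonpos (fun j _ => hgb j)
  linarith

end Suff

/-- Bilevel-to-MPCC: under convexity of the lower level and the Abadie CQ for `K(x)` at every
feasible point, any optimal solution `(x̄, ȳ)` of the optimistic bilevel problem admits
multipliers `(λ̄, μ̄)` making `(x̄, ȳ, λ̄, μ̄)` an optimal solution of the MPCC reformulation. -/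
theorem bilevel_to_MPCC {p q : ℕ} {I J : Type*} [Fintype I] [Fintype J]
    (X : Set (EuclideanSpace ℝ (Fin p)))
    (θl θf : EuclideanSpace ℝ (Fin p) → EuclideanSpace ℝ (Fin q) → ℝ)
    (hI : I → EuclideanSpace ℝ (Fin p) → EuclideanSpace ℝ (Fin q) → ℝ)
    (gJ : J → EuclideanSpace ℝ (Fin p) → EuclideanSpace ℝ (Fin q) → ℝ)
    (hθf : ∀ x ∈ X, ConvexOn ℝ Set.univ (θf x) ∧ ContDiff ℝ 1 (θf x))
    (hg : ∀ x ∈ X, ∀ j, ConvexOn ℝ Set.univ (gJ j x) ∧ ContDiff ℝ 1 (gJ j x))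
    (hh : ∀ x ∈ X, ∀ i, ∃ (φ : EuclideanSpace ℝ (Fin q) →ₗ[ℝ] ℝ) (c : ℝ),
      ∀ y, hI i x y = φ y + c)
    (hKne : ∀ x ∈ X, (lowerFeasSet hI gJ x).Nonempty)
    (hKcpt : ∀ x ∈ X, IsCompact (lowerFeasSet hI gJ x))
    (hCQ : ∀ x ∈ X, ∀ y ∈ lowerFeasSet hI gJ x,
      bouligandTangentCone (lowerFeasSet hI gJ x) y = linearizedConeLower hI gJ x y)
    (xbar : EuclideanSpace ℝ (Fin p)) (ybar : EuclideanSpace ℝ (Fin q))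
    (hfeas : xbar ∈ X ∧ ybar ∈ lowerSolSet θf hI gJ xbar)
    (hopt : ∀ x ∈ X, ∀ y ∈ lowerSolSet θf hI gJ x, θl xbar ybar ≤ θl x y) :
    ∃ (lambar : I → ℝ) (mubar : J → ℝ),
      MPCCFeasible X θf hI gJ xbar ybar lambar mubar ∧
      ∀ (x : EuclideanSpace ℝ (Fin p)) (y : EuclideanSpace ℝ (Fin q))
        (lam : I → ℝ) (mu : J → ℝ),
        MPCCFeasible X θf hI gJ x y lam mu → θl xbar ybar ≤ θl x y := by
  classical
  obtain ⟨hxX, hyS⟩ := hfeas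
  obtain ⟨hyK, hymin⟩ := hyS
  -- Step A: first-order optimality over the linearized cone
  have stepA : ∀ ν ∈ linearizedConeLower hI gJ xbar ybar,
      0 ≤ ⟪gradient (θf xbar) ybar, ν⟫ := by
    intro ν hν
    have hT : ν ∈ bouligandTangentCone (lowerFeasSet hI gJ xbar) ybar := by
      rw [hCQ xbar hxX ybar hyK]; exact hν
    exact grad_nonneg_tangent (hθf xbar hxX).1 (hθf xbar hxX).2 hymin hT
  -- Step B: Farkas
  set Jact := {j : J // gJ j xbar ybar = 0} with hJact
  set v : (I ⊕ I) ⊕ Jact → EuclideanSpace ℝ (Fin q) :=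
    Sum.elim (Sum.elim (fun i => gradient (hI i xbar) ybar)
      (fun i => -(gradient (hI i xbar) ybar)))
      (fun j => gradient (gJ j.1 xbar) ybar) with hv
  have hfk : ∀ ν, (∀ i, ⟪v i, ν⟫ ≤ 0) → ⟪-(gradient (θf xbar) ybar), ν⟫ ≤ 0 := by
    intro ν hν
    have hL : ν ∈ linearizedConeLower hI gJ xbar ybar := by
      constructor
      · intro i
        have h1 := hν (Sum.inl (Sum.inl i))
        have h2 := hν (Sum.inl (Sum.inr i))
        simp only [hv, Sum.elim_inl, Sum.elim_inr, inner_neg_left, neg_nonpos] at h1 h2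
        exact le_antisymm h1 h2
      · intro j hj
        have h1 := hν (Sum.inr ⟨j, hj⟩)
        simpa only [hv, Sum.elim_inr] using h1
    have h2 := stepA ν hL
    rw [inner_neg_left]; linarith
  obtain ⟨μ, hμnn, hμsum⟩ := farkas v (-(gradient (θf xbar) ybar)) hfk
  rw [Fintype.sum_sum_type, Fintype.sum_sum_type] at hμsum
  simp only [hv, Sum.elim_inl, Sum.elim_inr] at hμsum
  -- define the multipliers
  set lambar : I → ℝ := fun i => μ (Sum.inl (Sum.inl i)) - μ (Sum.inl (Sum.inr i))
    with hlambar
  set mubar : J → ℝ := fun j =>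
    if h : gJ j xbar ybar = 0 then μ (Sum.inr (⟨j, h⟩ : Jact)) else 0 with hmubar
  have hsumlam : ∑ i, lambar i • gradient (hI i xbar) ybar
      = ∑ i, μ (Sum.inl (Sum.inl i)) • gradient (hI i xbar) ybar
        + ∑ i, μ (Sum.inl (Sum.inr i)) • -(gradient (hI i xbar) ybar) := by
    simp only [hlambar, sub_smul, smul_neg, Finset.sum_sub_distrib,
      Finset.sum_neg_distrib]
    abel
  have hsummu : ∑ j, mubar j • gradient (gJ j xbar) ybar
      = ∑ j : Jact, μ (Sum.inr j) • gradient (gJ j.1 xbar) ybar := by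
    rw [← Fintype.sum_subtype_add_sum_subtype (fun j => gJ j xbar ybar = 0)
      (fun j => mubar j • gradient (gJ j xbar) ybar)]
    have hz : ∑ j : {x : J // ¬ gJ x xbar ybar = 0},
        mubar j.1 • gradient (gJ j.1 xbar) ybar = 0 :=
      Finset.sum_eq_zero (fun j _ => by
        rw [hmubar]; simp only [dif_neg j.2, zero_smul])
    rw [hz, add_zero]
    refine Finset.sum_congr rfl (fun j _ => ?_)
    rw [hmubar]
    simp only [dif_pos j.2]
  have hstat : gradient (θf xbar) ybar
      + ∑ i, lambar i • gradient (hI i xbar) ybar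
      + ∑ j, mubar j • gradient (gJ j xbar) ybar = 0 := by
    have hG : gradient (θf xbar) ybar
        = -(∑ x : I, μ (Sum.inl (Sum.inl x)) • gradient (hI x xbar) ybar +
            ∑ x : I, μ (Sum.inl (Sum.inr x)) • -gradient (hI x xbar) ybar +
          ∑ x : Jact, μ (Sum.inr x) • gradient (gJ (↑x) xbar) ybar) := by
      rw [hμsum, neg_neg]
    rw [hsumlam, hsummu, hG]
    abel
  have hmubarnn : ∀ j, 0 ≤ mubar j := by
    intro j
    rw [hmubar]
    by_cases h : gJ j xbar ybar = 0
    · simp only [dif_pos h]; exact hμnn _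
    · simp only [dif_neg h]; exact le_refl 0
  have hcompl : ∀ j, mubar j * gJ j xbar ybar = 0 := by
    intro j
    by_cases h : gJ j xbar ybar = 0
    · rw [h, mul_zero]
    · rw [hmubar]; simp only [dif_neg h, zero_mul]
  have hMPCCfeas : MPCCFeasible X θf hI gJ xbar ybar lambar mubar :=
    ⟨hxX, hstat, hmubarnn, hcompl, hyK.1, hyK.2⟩
  refine ⟨lambar, mubar, hMPCCfeas, ?_⟩
  intro x y lam mu hfeas'
  exact hopt x hfeas'.1 y
    (MPCC_lower_opt (hθf x hfeas'.1) (hg x hfeas'.1) (hh x hfeas'.1) hfeas')
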